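/- For n ≥ 2, the identity (x² - 1) · d^n/dx^n[(x² - 1)^{n-1}] = n(n-1) · d^{n-2}/dx^{n-2}[(x² - 1)^{n-1}] holds for all real x. -/

import Mathlib

open intervalIntegral Finset Polynomial

/-- The `n`-th Legendre polynomial (as a function), via the Rodrigues formula,
normalized so that `legendreP n 1 = 1`. -/
noncomputable def legendreP (n : ℕ) : ℝ → ℝ :=
  fun x => (1 / (2 ^ n * (n.factorial : ℝ))) * iteratedDeriv n (fun y => (y ^ 2 - 1) ^ n) x

/-- `Qpoly n x = -∫_x^1 L_{n-1}(t) dt`. -/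
noncomputable def Qpoly (n : ℕ) : ℝ → ℝ :=
  fun x => -∫ t in x..(1 : ℝ), legendreP (n - 1) t

private lemma itder_eval (p : Polynomial ℝ) (k : ℕ) :
    iteratedDeriv k (fun y : ℝ => p.eval y) = fun y => (derivative^[k] p).eval y := by
  induction k with
  | zero => simp
  | succ k ih =>
    rw [iteratedDeriv_succ, ih]
    funext y
    rw [Function.iterate_succ_apply']
    exact Polynomial.deriv _

private lemma dX : derivative ((X : Polynomial ℝ) ^ 2 - 1) = 2 * X := by
  simp [derivative_sub, map_ofNat]
  norm_num

private lemma lemB (j : ℕ) (r : Polynomial ℝ) :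
    derivative^[j + 1] ((X : Polynomial ℝ) * r) =
      X * derivative^[j + 1] r + ((j + 1 : ℕ) : Polynomial ℝ) * derivative^[j] r := by
  induction j generalizing r with
  | zero => simp [derivative_mul]; ring
  | succ j ih =>
    have h1 : derivative^[j + 1 + 1] ((X : Polynomial ℝ) * r)
        = derivative (derivative^[j + 1] ((X : Polynomial ℝ) * r)) :=
      Function.iterate_succ_apply' _ _ _
    have e1 : derivative (derivative^[j + 1] r) = derivative^[j + 1 + 1] r :=
      (Function.iterate_succ_apply' _ _ _).symm
    have e2 : derivative (derivative^[j] r) = derivative^[j + 1] r :=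
      (Function.iterate_succ_apply' _ _ _).symm
    rw [h1, ih, derivative_add, derivative_mul, derivative_mul, derivative_X,
      derivative_natCast, e1, e2]
    push_cast
    ring

private lemma lemA (j : ℕ) (r : Polynomial ℝ) :
    derivative^[j + 1] (((X : Polynomial ℝ) ^ 2 - 1) * r) =
      (X ^ 2 - 1) * derivative^[j + 1] r
        + ((2 * (j + 1) : ℕ) : Polynomial ℝ) * X * derivative^[j] r
        + (((j + 1) * j : ℕ) : Polynomial ℝ) * derivative^[j - 1] r := by
  induction j generalizing r with
  | zero => simp [derivative_mul, dX, map_ofNat]; ring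
  | succ j ih =>
    have h1 : derivative^[j + 1 + 1] (((X : Polynomial ℝ) ^ 2 - 1) * r)
        = derivative (derivative^[j + 1] (((X : Polynomial ℝ) ^ 2 - 1) * r)) :=
      Function.iterate_succ_apply' _ _ _
    have e1 : derivative (derivative^[j + 1] r) = derivative^[j + 1 + 1] r :=
      (Function.iterate_succ_apply' _ _ _).symm
    have e2 : derivative (derivative^[j] r) = derivative^[j + 1] r :=
      (Function.iterate_succ_apply' _ _ _).symm
    have e3 : (((j + 1) * j : ℕ) : Polynomial ℝ) * derivative (derivative^[j - 1] r)
        = (((j + 1) * j : ℕ) : Polynomial ℝ) * derivative^[j] r := by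
      cases j with
      | zero => simp
      | succ m =>
        rw [Nat.succ_sub_one, show derivative (derivative^[m] r) = derivative^[m + 1] r
          from (Function.iterate_succ_apply' _ _ _).symm]
    rw [h1, ih, derivative_add, derivative_add, derivative_mul, derivative_mul, derivative_mul,
      derivative_mul, dX, derivative_X, e1, e2, e3]
    simp only [derivative_natCast, Nat.add_sub_cancel]
    push_cast
    ring

private lemma key (k : ℕ) :
    ((X : Polynomial ℝ) ^ 2 - 1) * derivative^[k + 2] (((X : Polynomial ℝ) ^ 2 - 1) ^ (k + 1)) =
      (((k + 2) * (k + 1) : ℕ) : Polynomial ℝ) *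
        derivative^[k] (((X : Polynomial ℝ) ^ 2 - 1) ^ (k + 1)) := by
  have hrel : ((X : Polynomial ℝ) ^ 2 - 1) * derivative (((X : Polynomial ℝ) ^ 2 - 1) ^ (k + 1)) =
      ((2 * (k + 1) : ℕ) : Polynomial ℝ) * ((X : Polynomial ℝ)
        * ((X : Polynomial ℝ) ^ 2 - 1) ^ (k + 1)) := by
    rw [derivative_pow, dX, Nat.add_sub_cancel, C_eq_natCast, pow_succ]
    push_cast
    ring
  have h2 := congrArg (fun q => derivative^[k + 1] q) hrel
  rw [lemA k (derivative (((X : Polynomial ℝ) ^ 2 - 1) ^ (k + 1))),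
    iterate_derivative_natCast_mul, lemB k] at h2
  rw [show derivative^[k + 1] (derivative (((X : Polynomial ℝ) ^ 2 - 1) ^ (k + 1)))
      = derivative^[k + 2] (((X : Polynomial ℝ) ^ 2 - 1) ^ (k + 1))
    from (Function.iterate_succ_apply _ _ _).symm] at h2
  rw [show derivative^[k] (derivative (((X : Polynomial ℝ) ^ 2 - 1) ^ (k + 1)))
      = derivative^[k + 1] (((X : Polynomial ℝ) ^ 2 - 1) ^ (k + 1))
    from (Function.iterate_succ_apply _ _ _).symm] at h2
  have hk : (((k + 1) * k : ℕ) : Polynomial ℝ)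
        * derivative^[k - 1] (derivative (((X : Polynomial ℝ) ^ 2 - 1) ^ (k + 1)))
      = (((k + 1) * k : ℕ) : Polynomial ℝ)
        * derivative^[k] (((X : Polynomial ℝ) ^ 2 - 1) ^ (k + 1)) := by
    cases k with
    | zero => simp
    | succ m =>
      rw [Nat.succ_sub_one, show derivative^[m] (derivative (((X : Polynomial ℝ) ^ 2 - 1) ^ (m + 1 + 1)))
          = derivative^[m + 1] (((X : Polynomial ℝ) ^ 2 - 1) ^ (m + 1 + 1))
        from (Function.iterate_succ_apply _ _ _).symm]
  rw [hk] at h2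
  push_cast at h2 ⊢
  linear_combination h2

theorem stmt3 (n : ℕ) (hn : 2 ≤ n) (x : ℝ) :
    (x ^ 2 - 1) * iteratedDeriv n (fun y : ℝ => (y ^ 2 - 1) ^ (n - 1)) x =
      (n : ℝ) * ((n : ℝ) - 1) * iteratedDeriv (n - 2) (fun y : ℝ => (y ^ 2 - 1) ^ (n - 1)) x := by
  obtain ⟨k, rfl⟩ : ∃ k, n = k + 2 := ⟨n - 2, by omega⟩
  have hfun : (fun y : ℝ => (y ^ 2 - 1) ^ (k + 2 - 1)) =
      fun y : ℝ => ((((X : Polynomial ℝ) ^ 2 - 1) ^ (k + 1)).eval y) := by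
    funext y; simp
  rw [hfun, itder_eval, itder_eval]
  have h := congrArg (fun q => Polynomial.eval x q) (key k)
  simp only [eval_mul, eval_sub, eval_pow, eval_X, eval_one, eval_natCast] at h
  have hk2 : k + 2 - 2 = k := by omega
  rw [hk2, h]
  push_cast
  ring
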